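/- Let G be a finite group, d ≥ d(G), and g a vertex of Δ_d(G). Then the set G_g = {a ∈ G : g and g^a lie in the same connected component of Δ_d(G), or g = g^a} is a subgroup of G, and moreover G_g = G. -/

import Mathlib

/-- The graph `Γ_d(G)`: distinct `x, y` are adjacent iff some generating set of
cardinality `d` contains both. -/
def genGraph (G : Type*) [Group G] (d : ℕ) : SimpleGraph G where
  Adj x y := x ≠ y ∧ ∃ s : Finset G,
    s.card = d ∧ x ∈ s ∧ y ∈ s ∧ Subgroup.closure (s : Set G) = ⊤
  symm := by
    constructor
    rintro x y ⟨hxy, s, h1, h2, h3, h4⟩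
    exact ⟨hxy.symm, s, h1, h3, h2, h4⟩
  loopless := by constructor; rintro x ⟨hx, -⟩; exact hx rfl

/-- A vertex of `Γ_d(G)` is non-isolated if it has a neighbour. -/
def NonIsolated (G : Type*) [Group G] (d : ℕ) (x : G) : Prop :=
  ∃ y, (genGraph G d).Adj x y

/-- `Δ_d(G)`: the subgraph of `Γ_d(G)` induced on the non-isolated vertices. -/
def deltaGraph (G : Type*) [Group G] (d : ℕ) :
    SimpleGraph {x : G // NonIsolated G d x} :=
  (genGraph G d).comap Subtype.val

/-- `d(G)`: the minimal cardinality of a generating set of `G`. -/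
noncomputable def minGen (G : Type*) [Group G] : ℕ :=
  sInf {n : ℕ | ∃ f : Fin n → G, Subgroup.closure (Set.range f) = ⊤}

section aux
variable {G : Type*} [Group G]

lemma closure_conj_image (a : G) (s : Set G) (h : Subgroup.closure s = ⊤) :
    Subgroup.closure ((fun z => a⁻¹ * z * a) '' s) = ⊤ := by
  have he : (fun z => a⁻¹ * z * a) = ⇑(MulAut.conj a⁻¹).toMonoidHom := by
    ext z; simp [MulAut.conj_apply]
  rw [he, ← MonoidHom.map_closure, h]
  exact Subgroup.map_top_of_surjective _ (MulEquiv.surjective _)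

lemma adj_conj {d : ℕ} (a : G) {x y : G} (h : (genGraph G d).Adj x y) :
    (genGraph G d).Adj (a⁻¹ * x * a) (a⁻¹ * y * a) := by
  classical
  obtain ⟨hxy, s, hcard, hx, hy, hgen⟩ := h
  have hinj : Function.Injective (fun z : G => a⁻¹ * z * a) := by
    intro u v huv
    simpa using huv
  refine ⟨fun hc => hxy (hinj hc), s.image (fun z => a⁻¹ * z * a), ?_,
    Finset.mem_image_of_mem _ hx, Finset.mem_image_of_mem _ hy, ?_⟩
  · rw [Finset.card_image_of_injective _ hinj, hcard]
  · rw [Finset.coe_image]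
    exact closure_conj_image a _ hgen

lemma nonIsolated_conj {d : ℕ} (a : G) {x : G} (h : NonIsolated G d x) :
    NonIsolated G d (a⁻¹ * x * a) := by
  obtain ⟨y, hy⟩ := h
  exact ⟨a⁻¹ * y * a, adj_conj a hy⟩

/-- conjugation as a graph hom of `deltaGraph`. -/
def conjHomDelta (d : ℕ) (a : G) : deltaGraph G d →g deltaGraph G d where
  toFun x := ⟨a⁻¹ * x.1 * a, nonIsolated_conj a x.2⟩
  map_rel' h := adj_conj a h

lemma reach_congr {d : ℕ} {u v u' v' : G} (hu : u = u') (hv : v = v')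
    {h1 : NonIsolated G d u} {h2 : NonIsolated G d v}
    {h3 : NonIsolated G d u'} {h4 : NonIsolated G d v'}
    (h : (deltaGraph G d).Reachable ⟨u, h1⟩ ⟨v, h2⟩) :
    (deltaGraph G d).Reachable ⟨u', h3⟩ ⟨v', h4⟩ := by
  subst hu; subst hv; exact h

lemma reach_conj {d : ℕ} (a : G) {u v : G}
    {h1 : NonIsolated G d u} {h2 : NonIsolated G d v}
    (h : (deltaGraph G d).Reachable ⟨u, h1⟩ ⟨v, h2⟩) :
    (deltaGraph G d).Reachable ⟨a⁻¹ * u * a, nonIsolated_conj a h1⟩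
      ⟨a⁻¹ * v * a, nonIsolated_conj a h2⟩ :=
  h.map (conjHomDelta d a)

/-- key step: generators are in the set -/
lemma gen_step {d : ℕ} {g x : G} {s : Finset G} (hcard : s.card = d)
    (hgs : g ∈ s) (hxs : x ∈ s) (hgen : Subgroup.closure (s : Set G) = ⊤)
    (hg : NonIsolated G d g) :
    g = x⁻¹ * g * x ∨ ∃ h2 : NonIsolated G d (x⁻¹ * g * x),
      (deltaGraph G d).Reachable ⟨g, hg⟩ ⟨x⁻¹ * g * x, h2⟩ := by
  classical
  set g' := x⁻¹ * g * x with hg'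
  by_cases heq : g = g'
  · exact Or.inl heq
  right
  by_cases hmem : g' ∈ s
  · have hadj : (genGraph G d).Adj g g' := ⟨heq, s, hcard, hgs, hmem, hgen⟩
    have h2 : NonIsolated G d g' := ⟨g, hadj.symm⟩
    exact ⟨h2, SimpleGraph.Adj.reachable hadj⟩
  · have hxg : x ≠ g := by
      rintro rfl
      exact heq (by rw [hg']; group)
    have hxe : x ∈ s.erase g := Finset.mem_erase.mpr ⟨hxg, hxs⟩
    have hge : g' ∉ s.erase g := fun hc => hmem (Finset.mem_of_mem_erase hc)
    set t : Finset G := insert g' (s.erase g) with ht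
    have htcard : t.card = d := by
      rw [ht, Finset.card_insert_of_notMem hge, Finset.card_erase_of_mem hgs, hcard]
      have : 1 ≤ d := by
        rw [← hcard]
        exact Finset.card_pos.mpr ⟨g, hgs⟩
      omega
    have htgen : Subgroup.closure (t : Set G) = ⊤ := by
      rw [eq_top_iff, ← hgen]
      rw [Subgroup.closure_le]
      intro z hz
      by_cases hzg : z = g
      · subst hzg
        have hx' : x ∈ Subgroup.closure (t : Set G) :=
          Subgroup.subset_closure (by exact_mod_cast Finset.mem_insert_of_mem hxe)
        have hg'' : g' ∈ Subgroup.closure (t : Set G) :=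
          Subgroup.subset_closure (by exact_mod_cast Finset.mem_insert_self g' _)
        have : x * g' * x⁻¹ ∈ Subgroup.closure (t : Set G) := by
          exact mul_mem (mul_mem hx' hg'') (inv_mem hx')
        have hrw : x * g' * x⁻¹ = z := by rw [hg']; group
        rwa [hrw] at this
      · have : z ∈ s.erase g := Finset.mem_erase.mpr ⟨hzg, hz⟩
        exact Subgroup.subset_closure (by exact_mod_cast Finset.mem_insert_of_mem this)
    have hgx : (genGraph G d).Adj g x := ⟨Ne.symm hxg, s, hcard, hgs, hxs, hgen⟩
    have hxg' : (genGraph G d).Adj x g' := by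
      refine ⟨fun hc => hmem (hc ▸ hxs), t, htcard, Finset.mem_insert_of_mem hxe,
        Finset.mem_insert_self g' _, htgen⟩
    have h2 : NonIsolated G d g' := ⟨x, hxg'.symm⟩
    have hxiso : NonIsolated G d x := ⟨g, hgx.symm⟩
    have r1 : (deltaGraph G d).Reachable ⟨g, hg⟩ ⟨x, hxiso⟩ :=
      SimpleGraph.Adj.reachable hgx
    have r2 : (deltaGraph G d).Reachable ⟨x, hxiso⟩ ⟨g', h2⟩ :=
      SimpleGraph.Adj.reachable hxg'
    exact ⟨h2, r1.trans r2⟩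

end aux


theorem stmt2 (G : Type*) [Group G] [Finite G] (d : ℕ) (hd : minGen G ≤ d)
    (g : G) (hg : NonIsolated G d g) :
    ∃ H : Subgroup G,
      (H : Set G) = {a : G | g = a⁻¹ * g * a ∨
        ∃ h2 : NonIsolated G d (a⁻¹ * g * a),
          (deltaGraph G d).Reachable ⟨g, hg⟩ ⟨a⁻¹ * g * a, h2⟩} ∧
      H = ⊤ := by
  set P : G → Prop := fun a => g = a⁻¹ * g * a ∨
    ∃ h2 : NonIsolated G d (a⁻¹ * g * a),
      (deltaGraph G d).Reachable ⟨g, hg⟩ ⟨a⁻¹ * g * a, h2⟩ with hP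
  have hone : P 1 := Or.inl (by group)
  have hmul : ∀ {a b : G}, P a → P b → P (a * b) := by
    rintro a b (ha | ⟨h2a, ha⟩) hb
    · -- g = g^a, so g^(ab) = g^b
      have key : (a*b)⁻¹ * g * (a*b) = b⁻¹ * g * b := by
        rw [show (a*b)⁻¹ * g * (a*b) = b⁻¹ * (a⁻¹ * g * a) * b by group, ← ha]
      rcases hb with hb | ⟨h2b, hb⟩
      · exact Or.inl (by rw [key, ← hb])
      · exact Or.inr ⟨key ▸ h2b, reach_congr rfl key.symm hb⟩
    · -- reach g g^a; conjugate by b to get reach g^b g^(ab)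
      have hconj := reach_conj b ha
      have key : b⁻¹ * (a⁻¹ * g * a) * b = (a*b)⁻¹ * g * (a*b) := by group
      rcases hb with hb | ⟨h2b, hb⟩
      · -- g = g^b
        have : (deltaGraph G d).Reachable ⟨g, hg⟩
            ⟨(a*b)⁻¹ * g * (a*b), key ▸ nonIsolated_conj b h2a⟩ :=
          reach_congr hb.symm key hconj
        exact Or.inr ⟨_, this⟩
      · have h1 : (deltaGraph G d).Reachable ⟨b⁻¹ * g * b, h2b⟩
            ⟨(a*b)⁻¹ * g * (a*b), key ▸ nonIsolated_conj b h2a⟩ :=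
          reach_congr rfl key hconj
        exact Or.inr ⟨_, hb.trans h1⟩
  have hinv : ∀ {a : G}, P a → P a⁻¹ := by
    rintro a (ha | ⟨h2a, ha⟩)
    · refine Or.inl ?_
      conv_rhs => rw [ha]
      group
    · have hconj := reach_conj a⁻¹ ha
      have k2 : a⁻¹⁻¹ * (a⁻¹ * g * a) * a⁻¹ = g := by group
      have h4 : NonIsolated G d (a⁻¹⁻¹ * g * a⁻¹) := nonIsolated_conj a⁻¹ hg
      have hr : (deltaGraph G d).Reachable ⟨a⁻¹⁻¹ * g * a⁻¹, h4⟩ ⟨g, hg⟩ :=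
        reach_congr rfl k2 hconj
      exact Or.inr ⟨h4, hr.symm⟩
  refine ⟨⟨⟨⟨{a | P a}, fun ha hb => hmul ha hb⟩, hone⟩, fun ha => hinv ha⟩, rfl, ?_⟩
  rw [eq_top_iff]
  obtain ⟨y, ⟨hne, s, hcard, hgs, hys, hgen⟩⟩ := id hg
  rw [← hgen, Subgroup.closure_le]
  intro x hx
  exact gen_step hcard hgs hx hgen hg
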